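/- Let f : ℝ^{n} × ℝ^{m} → ℝ ∪ {+∞} be defined by f(z, c, u) = −Σ_t U_t(c_t) if Δz_t + c_t + u_t ∈ C_t and z_t ∈ D_t for all t, and +∞ otherwise, where U_t are finite concave functions and C_t, D_t are nonempty closed convex sets containing 0. Then the recession function is f^∞(z, c, u) = −Σ_t U_t^∞(c_t) if Δz_t + c_t + u_t ∈ C_t^∞ and z_t ∈ D_t^∞ for all t, and +∞ otherwise. -/

import Mathlib

open scoped Classical

noncomputable def recFn {E : Type*} [AddCommGroup E] [Module ℝ E]
    (h : E → EReal) (xbar x : E) : EReal :=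
  ⨆ l : {l : ℝ // 0 < l}, (((l : ℝ)⁻¹ : ℝ) : EReal) * (h (xbar + (l : ℝ) • x) - h xbar)

/-- Concave recession function of a finite concave function, with values in `EReal`. -/
noncomputable def cRec {E : Type*} [AddCommGroup E] [Module ℝ E]
    (U : E → ℝ) (cbar c : E) : EReal :=
  ⨅ l : {l : ℝ // 0 < l}, ((((l : ℝ)⁻¹ * (U (cbar + (l : ℝ) • c) - U cbar)) : ℝ) : EReal)

/-- Recession cone of a set. -/
def recCone {E : Type*} [AddCommGroup E] [Module ℝ E] (C : Set E) : Set E :=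
  {d | ∀ x ∈ C, ∀ l : ℝ, 0 ≤ l → x + l • d ∈ C}

/-- Backward difference of a portfolio process, with `z₋₁ = 0`. -/
def delta {T d : ℕ} (z : Fin (T + 1) → (Fin d → ℝ)) (t : Fin (T + 1)) : Fin d → ℝ :=
  z t - (if (t : ℕ) = 0 then 0 else z (t - 1))

section Aux

abbrev PosR' := {l : ℝ // 0 < l}

instance : Nonempty PosR' := ⟨⟨1, one_pos⟩⟩

lemma ereal_iSup_neg {ι : Sort*} (g : ι → EReal) : (⨆ i, -(g i)) = -⨅ i, g i := by
  apply le_antisymm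
  · exact iSup_le fun i => EReal.neg_le_neg_iff.mpr (iInf_le _ i)
  · rw [EReal.neg_le]
    exact le_iInf fun i => EReal.neg_le.mpr (le_iSup (fun i => -(g i)) i)

lemma ereal_coe_iInf {ι : Sort*} [Nonempty ι] (h : ι → ℝ) (hb : BddBelow (Set.range h)) :
    (⨅ i, ((h i : ℝ) : EReal)) = (((⨅ i, h i : ℝ)) : EReal) :=
  (Monotone.map_ciInf_of_continuousAt (continuous_coe_real_ereal.continuousAt)
    (fun _ _ h => EReal.coe_le_coe_iff.2 h) hb).symm

lemma bddBelow_of_iInf_ne_bot (A : PosR' → ℝ) (h : (⨅ l, ((A l : ℝ) : EReal)) ≠ ⊥) :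
    BddBelow (Set.range A) := by
  obtain ⟨r, hr1, hr2⟩ := exists_between (bot_lt_iff_ne_bot.2 h)
  have hrt : r ≠ ⊤ := by
    intro hrt
    have : (⊤ : EReal) ≤ ((A ⟨1, one_pos⟩ : ℝ) : EReal) := hrt ▸ hr2.le.trans (iInf_le _ _)
    exact (EReal.coe_lt_top _).not_ge this
  lift r to ℝ using ⟨hrt, hr1.ne'⟩
  refine ⟨r, ?_⟩
  rintro x ⟨l, rfl⟩
  exact EReal.coe_le_coe_iff.1 (hr2.le.trans (iInf_le _ l))

lemma iInf_add_bot (A B : PosR' → ℝ)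
    (hA : ∀ l1 l2 : PosR', l1.1 ≤ l2.1 → A l2 ≤ A l1)
    (hB : ∀ l1 l2 : PosR', l1.1 ≤ l2.1 → B l2 ≤ B l1)
    (h : (⨅ l, ((A l : ℝ) : EReal)) = ⊥) :
    (⨅ l, ((A l + B l : ℝ) : EReal)) = ⊥ := by
  rw [iInf_eq_bot]
  intro b hb
  obtain ⟨r, hr1, hr2⟩ := exists_between hb
  have hrt : r ≠ ⊤ := (hr2.trans_le le_top).ne
  lift r to ℝ using ⟨hrt, hr1.ne'⟩
  obtain ⟨l1, hl1⟩ := iInf_eq_bot.1 h ((r - B ⟨1, one_pos⟩ : ℝ) : EReal) (EReal.bot_lt_coe _)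
  set l2 : PosR' := ⟨max l1.1 1, lt_of_lt_of_le one_pos (le_max_right _ _)⟩ with hl2def
  refine ⟨l2, lt_trans ?_ hr2⟩
  have h1 : A l2 ≤ A l1 := hA l1 l2 (le_max_left _ _)
  have h2 : B l2 ≤ B ⟨1, one_pos⟩ := hB ⟨1, one_pos⟩ l2 (le_max_right _ _)
  have h3 : A l1 < r - B ⟨1, one_pos⟩ := EReal.coe_lt_coe_iff.1 hl1
  exact EReal.coe_lt_coe_iff.2 (by linarith)

lemma iInf_add_eq (A B : PosR' → ℝ)
    (hA : ∀ l1 l2 : PosR', l1.1 ≤ l2.1 → A l2 ≤ A l1)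
    (hB : ∀ l1 l2 : PosR', l1.1 ≤ l2.1 → B l2 ≤ B l1) :
    (⨅ l, ((A l + B l : ℝ) : EReal)) = (⨅ l, ((A l : ℝ) : EReal)) + ⨅ l, ((B l : ℝ) : EReal) := by
  by_cases hA0 : (⨅ l, ((A l : ℝ) : EReal)) = ⊥
  · rw [iInf_add_bot A B hA hB hA0, hA0, EReal.bot_add]
  by_cases hB0 : (⨅ l, ((B l : ℝ) : EReal)) = ⊥
  · have : (⨅ l, ((B l + A l : ℝ) : EReal)) = ⊥ := iInf_add_bot B A hB hA hB0
    simp_rw [add_comm (A _) (B _)]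
    rw [this, hB0, EReal.add_bot]
  · have hbA := bddBelow_of_iInf_ne_bot A hA0
    have hbB := bddBelow_of_iInf_ne_bot B hB0
    obtain ⟨mA, hmA⟩ := id hbA
    obtain ⟨mB, hmB⟩ := id hbB
    have hmA' : ∀ l, mA ≤ A l := fun l => hmA ⟨l, rfl⟩
    have hmB' : ∀ l, mB ≤ B l := fun l => hmB ⟨l, rfl⟩
    have hbAB : BddBelow (Set.range fun l => A l + B l) := by
      refine ⟨mA + mB, ?_⟩; rintro x ⟨l, rfl⟩; exact add_le_add (hmA' l) (hmB' l)
    rw [ereal_coe_iInf A hbA, ereal_coe_iInf B hbB, ereal_coe_iInf _ hbAB, ← EReal.coe_add,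
      EReal.coe_eq_coe_iff]
    apply le_antisymm
    · refine le_of_forall_pos_le_add ?_
      intro ε hε
      obtain ⟨l1, h1⟩ := exists_lt_of_ciInf_lt (show (⨅ l, A l) < (⨅ l, A l) + ε/2 by linarith)
      obtain ⟨l2, h2⟩ := exists_lt_of_ciInf_lt (show (⨅ l, B l) < (⨅ l, B l) + ε/2 by linarith)
      set l : PosR' := ⟨max l1.1 l2.1, lt_of_lt_of_le l1.2 (le_max_left _ _)⟩
      have := ciInf_le hbAB l
      have e1 : A l ≤ A l1 := hA l1 l (le_max_left _ _)
      have e2 : B l ≤ B l2 := hB l2 l (le_max_right _ _)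
      linarith
    · exact le_ciInf fun l => add_le_add (ciInf_le hbA l) (ciInf_le hbB l)

lemma iInf_sum_eq {n : ℕ} (q : Fin n → PosR' → ℝ)
    (hq : ∀ t, ∀ l1 l2 : PosR', l1.1 ≤ l2.1 → q t l2 ≤ q t l1) (s : Finset (Fin n)) :
    (⨅ l, ((∑ t ∈ s, q t l : ℝ) : EReal)) = ∑ t ∈ s, ⨅ l, ((q t l : ℝ) : EReal) := by
  classical
  induction s using Finset.induction_on with
  | empty => simp
  | insert a s' hx ih =>
      rw [Finset.sum_insert hx]
      simp_rw [Finset.sum_insert hx]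
      rw [← ih, iInf_add_eq (q a) (fun l => ∑ t ∈ s', q t l) (hq a)
        (fun l1 l2 h => Finset.sum_le_sum fun t _ => hq t l1 l2 h)]

section E
variable {E : Type*} [NormedAddCommGroup E] [NormedSpace ℝ E]

lemma quot_anti {U : E → ℝ} (hU : ConcaveOn ℝ Set.univ U) (x c : E) {l1 l2 : ℝ}
    (h1 : 0 < l1) (h2 : l1 ≤ l2) :
    l2⁻¹ * (U (x + l2 • c) - U x) ≤ l1⁻¹ * (U (x + l1 • c) - U x) := by
  have hl2 : 0 < l2 := h1.trans_le h2
  set s := l1 / l2 with hs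
  have hs0 : 0 < s := div_pos h1 hl2
  have hs1 : s ≤ 1 := (div_le_one hl2).2 h2
  have hsl : s * l2 = l1 := div_mul_cancel₀ _ hl2.ne'
  have key : (1 - s) • x + s • (x + l2 • c) = x + l1 • c := by
    rw [smul_add, smul_smul, hsl, sub_smul, one_smul]; abel
  have hcc := hU.2 (Set.mem_univ x) (Set.mem_univ (x + l2 • c))
    (show (0:ℝ) ≤ 1 - s by linarith) hs0.le (show (1 - s) + s = 1 by ring)
  rw [key] at hcc
  simp only [smul_eq_mul] at hcc
  have e1 : l1⁻¹ * s = l2⁻¹ := by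
    rw [hs]; field_simp
  calc l2⁻¹ * (U (x + l2 • c) - U x) = l1⁻¹ * (s * (U (x + l2 • c) - U x)) := by
        rw [← mul_assoc, e1]
    _ = l1⁻¹ * (((1 - s) * U x + s * U (x + l2 • c)) - U x) := by ring
    _ ≤ l1⁻¹ * (U (x + l1 • c) - U x) := by
        apply mul_le_mul_of_nonneg_left _ (inv_nonneg.2 h1.le)
        linarith

lemma mem_recCone_of_forall {C : Set E} (hcl : IsClosed C) (hcv : Convex ℝ C) {xb : E}
    (hxb : xb ∈ C) {dd : E} (h : ∀ l : ℝ, 0 < l → xb + l • dd ∈ C) :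
    ∀ v ∈ C, ∀ l : ℝ, 0 ≤ l → v + l • dd ∈ C := by
  intro v hv l hl
  rcases eq_or_lt_of_le hl with rfl | hl'
  · simpa using hv
  · have hmem : ∀ n : ℕ, v + ((1:ℝ)/(n+1)) • (xb - v) + l • dd ∈ C := by
      intro n
      have hn : (0:ℝ) < n + 1 := by positivity
      have hC := hcv hv (h (l * (n+1)) (by positivity))
        (a := 1 - 1/(n+1)) (b := 1/(n+1))
        (by rw [sub_nonneg]; rw [div_le_one hn]; linarith) (by positivity) (by ring)
      have : (1 - 1/(n+1) : ℝ) • v + ((1:ℝ)/(n+1)) • (xb + (l * (n+1)) • dd)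
          = v + ((1:ℝ)/(n+1)) • (xb - v) + l • dd := by
        rw [smul_add, smul_smul, sub_smul, one_smul, smul_sub]
        have : (1:ℝ)/(n+1) * (l * (n+1)) = l := by field_simp
        rw [this]; abel
      rwa [this] at hC
    have htend : Filter.Tendsto (fun n : ℕ => v + ((1:ℝ)/(n+1)) • (xb - v) + l • dd)
        Filter.atTop (nhds (v + l • dd)) := by
      have h0 : Filter.Tendsto (fun n : ℕ => ((1:ℝ)/(n+1)) • (xb - v)) Filter.atTop
          (nhds ((0:ℝ) • (xb - v))) :=
        (tendsto_one_div_add_atTop_nhds_zero_nat).smul_const _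
      rw [zero_smul] at h0
      have := (tendsto_const_nhds (x := v) (f := Filter.atTop (α := ℕ))).add h0
      rw [add_zero] at this
      simpa using this.add (tendsto_const_nhds (x := l • dd))
    exact hcl.mem_of_tendsto htend (Filter.Eventually.of_forall hmem)

end E

section F
variable {E : Type*} [NormedAddCommGroup E] [NormedSpace ℝ E] [FiniteDimensional ℝ E]

lemma iInf_quot_le {U : E → ℝ} (hU : ConcaveOn ℝ Set.univ U) (x y c : E) :
    (⨅ l : PosR', ((((l:ℝ)⁻¹ * (U (y + (l:ℝ) • c) - U y)) : ℝ) : EReal))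
      ≤ ⨅ l : PosR', ((((l:ℝ)⁻¹ * (U (x + (l:ℝ) • c) - U x)) : ℝ) : EReal) := by
  have hUcont : Continuous U := continuousOn_univ.mp (hU.continuousOn isOpen_univ)
  set qx : PosR' → ℝ := fun l => (l:ℝ)⁻¹ * (U (x + (l:ℝ) • c) - U x) with hqx
  set qy : PosR' → ℝ := fun l => (l:ℝ)⁻¹ * (U (y + (l:ℝ) • c) - U y) with hqy
  have key : ∀ ε : ℝ, 0 < ε → ∀ l : PosR',
      (⨅ l, ((qy l : ℝ) : EReal)) + ((-ε : ℝ) : EReal) ≤ ((qx l : ℝ) : EReal) := by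
    intro ε hε
    set K : ℝ → ℝ := fun lam => (1 - lam) * U y + lam * U (lam⁻¹ • (x - (1 - lam) • y)) - U x
      with hKdef
    have hK1 : K 1 = 0 := by simp [hKdef]
    have hKc : ContinuousAt K 1 := by
      have h1 : ContinuousAt (fun lam : ℝ => lam⁻¹ • (x - (1 - lam) • y)) 1 :=
        ContinuousAt.smul (continuousAt_inv₀ one_ne_zero) (by fun_prop)
      have h2 : ContinuousAt (fun lam : ℝ => U (lam⁻¹ • (x - (1 - lam) • y))) 1 :=
        (hUcont.continuousAt).comp h1
      exact (((continuousAt_const.sub continuousAt_id).mul continuousAt_const).add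
        (continuousAt_id.mul h2)).sub continuousAt_const
    have htd : Filter.Tendsto K (nhds 1) (nhds 0) := by rwa [ContinuousAt, hK1] at hKc
    have hev : ∀ᶠ lam in nhds (1:ℝ), |K lam| < ε := by
      have := Metric.tendsto_nhds.mp htd ε hε
      simpa [Real.dist_eq] using this
    have hev' := hev.filter_mono (nhdsWithin_le_nhds (s := Set.Iio (1:ℝ)))
    have hIoo : ∀ᶠ lam in nhdsWithin (1:ℝ) (Set.Iio 1), lam ∈ Set.Ioo (0:ℝ) 1 :=
      Ioo_mem_nhdsLT_of_mem ⟨one_pos, le_refl 1⟩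
    obtain ⟨lam, hKe, hlam0, hlam1⟩ := (hev'.and hIoo).exists
    have claim1 : ∀ l : PosR', 1 ≤ (l:ℝ) →
        (⨅ l, ((qy l : ℝ) : EReal)) + ((-ε : ℝ) : EReal) ≤ ((qx l : ℝ) : EReal) := by
      intro l hl
      have hl0 : (0:ℝ) < l := l.2
      have h1lam : (0:ℝ) < 1 - lam := by linarith
      set w : E := lam⁻¹ • (x - (1 - lam) • y) with hwdef
      set μ : ℝ := l / (1 - lam) with hμdef
      have hμ : 0 < μ := div_pos hl0 h1lam
      have key2 : (1 - lam) • (y + μ • c) + lam • w = x + (l:ℝ) • c := by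
        rw [hwdef, smul_add, smul_smul]
        have e1 : (1 - lam) * μ = l := by rw [hμdef]; field_simp [h1lam.ne']
        rw [e1, smul_smul, mul_inv_cancel₀ hlam0.ne', one_smul]
        abel
      have hcc := hU.2 (Set.mem_univ (y + μ • c)) (Set.mem_univ w)
        (show (0:ℝ) ≤ 1 - lam by linarith) hlam0.le (show (1 - lam) + lam = 1 by ring)
      rw [key2] at hcc
      simp only [smul_eq_mul] at hcc
      have hq : μ⁻¹ * (U (y + μ • c) - U y) + K lam / l ≤ qx l := by
        have e2 : μ⁻¹ = (1 - lam) / l := by rw [hμdef, inv_div]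
        rw [hqx]
        simp only []
        rw [e2, inv_mul_eq_div, div_mul_eq_mul_div, ← add_div,
          div_le_div_iff_of_pos_right hl0]
        simp only [hKdef]
        linarith
      have t1 : (⨅ l, ((qy l : ℝ) : EReal)) ≤ ((μ⁻¹ * (U (y + μ • c) - U y) : ℝ) : EReal) :=
        iInf_le (fun l => ((qy l : ℝ) : EReal)) ⟨μ, hμ⟩
      have t2 : (-ε:ℝ) ≤ K lam / l := by
        have h1 : |K lam / (l:ℝ)| ≤ |K lam| := by
          rw [abs_div, abs_of_pos hl0]
          exact div_le_self (abs_nonneg _) hl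
        have h2 := neg_abs_le (K lam / (l:ℝ))
        linarith
      calc (⨅ l, ((qy l : ℝ) : EReal)) + ((-ε : ℝ) : EReal)
          ≤ ((μ⁻¹ * (U (y + μ • c) - U y) : ℝ) : EReal) + ((K lam / l : ℝ) : EReal) :=
            add_le_add t1 (EReal.coe_le_coe_iff.2 t2)
        _ = (((μ⁻¹ * (U (y + μ • c) - U y) + K lam / l : ℝ)) : EReal) :=
            (EReal.coe_add _ _).symm
        _ ≤ ((qx l : ℝ) : EReal) := EReal.coe_le_coe_iff.2 hq
    intro l
    by_cases hl : 1 ≤ (l:ℝ)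
    · exact claim1 l hl
    · refine (claim1 ⟨1, one_pos⟩ le_rfl).trans (EReal.coe_le_coe_iff.2 ?_)
      exact quot_anti hU x c l.2 (le_of_lt (not_le.1 hl))
  refine le_iInf fun l => ?_
  show (⨅ l, ((qy l : ℝ) : EReal)) ≤ ((qx l : ℝ) : EReal)
  by_cases hbot : (⨅ l, ((qy l : ℝ) : EReal)) = ⊥
  · exact le_trans (le_of_eq hbot) bot_le
  have hnetop : (⨅ l, ((qy l : ℝ) : EReal)) ≠ ⊤ :=
    fun h => (EReal.coe_lt_top (qy ⟨1, one_pos⟩)).not_ge (h ▸ iInf_le _ _)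
  rw [← EReal.coe_toReal hnetop hbot, EReal.coe_le_coe_iff]
  refine le_of_forall_pos_le_add fun ε hε => ?_
  have := key ε hε l
  rw [← EReal.coe_toReal hnetop hbot, ← EReal.coe_add, EReal.coe_le_coe_iff] at this
  simp only [hqx] at this ⊢
  linarith

lemma iInf_quot_base {U : E → ℝ} (hU : ConcaveOn ℝ Set.univ U) (x y c : E) :
    (⨅ l : PosR', ((((l:ℝ)⁻¹ * (U (x + (l:ℝ) • c) - U x)) : ℝ) : EReal))
      = ⨅ l : PosR', ((((l:ℝ)⁻¹ * (U (y + (l:ℝ) • c) - U y)) : ℝ) : EReal) :=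
  le_antisymm (iInf_quot_le hU y x c) (iInf_quot_le hU x y c)

end F

end Aux

/-- the recession function of the optimal-consumption integrand
`f(z,c,u) = −Σ_t U_t(c_t)` on `{Δz_t + c_t + u_t ∈ C_t, z_t ∈ D_t}` (`+∞` elsewhere)
is `f^∞(z,c,u) = −Σ_t U_t^∞(c_t)` on `{Δz_t + c_t + u_t ∈ C_t^∞, z_t ∈ D_t^∞}`
(`+∞` elsewhere). -/
theorem stmt19 (T d : ℕ) (U : Fin (T + 1) → (Fin d → ℝ) → ℝ)
    (hU : ∀ t, ConcaveOn ℝ Set.univ (U t))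
    (C D : Fin (T + 1) → Set (Fin d → ℝ))
    (hCne : ∀ t, (C t).Nonempty) (hCclosed : ∀ t, IsClosed (C t))
    (hCconv : ∀ t, Convex ℝ (C t)) (hC0 : ∀ t, (0 : Fin d → ℝ) ∈ C t)
    (hDne : ∀ t, (D t).Nonempty) (hDclosed : ∀ t, IsClosed (D t))
    (hDconv : ∀ t, Convex ℝ (D t)) (hD0 : ∀ t, (0 : Fin d → ℝ) ∈ D t)
    (f : (Fin (T + 1) → (Fin d → ℝ)) × (Fin (T + 1) → (Fin d → ℝ))
        × (Fin (T + 1) → (Fin d → ℝ)) → EReal)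
    (hf : ∀ p, f p =
      if ∀ t, delta p.1 t + p.2.1 t + p.2.2 t ∈ C t ∧ p.1 t ∈ D t
      then (((-(∑ t, U t (p.2.1 t))) : ℝ) : EReal) else ⊤) :
    ∀ pbar, f pbar ≠ ⊤ → ∀ p,
      recFn f pbar p =
        if ∀ t, delta p.1 t + p.2.1 t + p.2.2 t ∈ recCone (C t) ∧ p.1 t ∈ recCone (D t)
        then -(∑ t, cRec (U t) 0 (p.2.1 t)) else ⊤ := by
  rintro ⟨zbar, cbar, ubar⟩ hbar ⟨z, c, u⟩
  have Hbar : ∀ t, delta zbar t + cbar t + ubar t ∈ C t ∧ zbar t ∈ D t := by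
    by_contra h
    rw [hf, if_neg h] at hbar
    exact hbar rfl
  have hfbar : f (zbar, cbar, ubar) = ((-(∑ t, U t (cbar t)) : ℝ) : EReal) := by
    rw [hf, if_pos Hbar]
  have hdelta : ∀ (l : ℝ) (t), delta (zbar + l • z) t = delta zbar t + l • delta z t := by
    intro l t
    simp only [delta, Pi.add_apply, Pi.smul_apply]
    split
    · simp
    · rw [smul_sub]; abel
  have hpt : ∀ (l : ℝ) (t), delta (zbar + l • z) t + (cbar t + l • c t) + (ubar t + l • u t)
      = (delta zbar t + cbar t + ubar t) + l • (delta z t + c t + u t) := by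
    intro l t
    rw [hdelta, smul_add, smul_add]
    abel
  have hfval : ∀ l : ℝ, f ((zbar, cbar, ubar) + l • (z, c, u)) =
      if (∀ t, (delta zbar t + cbar t + ubar t) + l • (delta z t + c t + u t) ∈ C t
          ∧ zbar t + l • z t ∈ D t)
      then ((-(∑ t, U t (cbar t + l • c t)) : ℝ) : EReal) else ⊤ := by
    intro l
    rw [hf]
    simp only [Prod.fst_add, Prod.snd_add, Prod.smul_fst, Prod.smul_snd, Pi.add_apply,
      Pi.smul_apply, hpt l]
  by_cases hcone : ∀ t, delta z t + c t + u t ∈ recCone (C t) ∧ z t ∈ recCone (D t)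
  · rw [if_pos hcone]
    have hall : ∀ (l : PosR') (t),
        (delta zbar t + cbar t + ubar t) + (l:ℝ) • (delta z t + c t + u t) ∈ C t
          ∧ zbar t + (l:ℝ) • z t ∈ D t :=
      fun l t => ⟨(hcone t).1 _ (Hbar t).1 _ l.2.le, (hcone t).2 _ (Hbar t).2 _ l.2.le⟩
    set q : Fin (T+1) → PosR' → ℝ :=
      fun t l => (l:ℝ)⁻¹ * (U t (cbar t + (l:ℝ) • c t) - U t (cbar t)) with hqdef
    have hqanti : ∀ t, ∀ l1 l2 : PosR', l1.1 ≤ l2.1 → q t l2 ≤ q t l1 :=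
      fun t l1 l2 h => quot_anti (hU t) (cbar t) (c t) l1.2 h
    have hterm : ∀ l : PosR', (((l : ℝ)⁻¹ : ℝ) : EReal)
        * (f ((zbar, cbar, ubar) + (l : ℝ) • (z, c, u)) - f (zbar, cbar, ubar))
        = ((-(∑ t, q t l) : ℝ) : EReal) := by
      intro l
      rw [hfval, if_pos (hall l), hfbar, ← EReal.coe_sub, ← EReal.coe_mul]
      congr 1
      have e : ∑ t, q t l
          = (l:ℝ)⁻¹ * ((∑ t, U t (cbar t + (l:ℝ) • c t)) - ∑ t, U t (cbar t)) := by
        rw [hqdef]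
        rw [← Finset.sum_sub_distrib, Finset.mul_sum]
      rw [e]; ring
    calc recFn f (zbar, cbar, ubar) (z, c, u)
        = ⨆ l : PosR', ((-(∑ t, q t l) : ℝ) : EReal) := by
          rw [recFn]; exact iSup_congr hterm
      _ = ⨆ l : PosR', -(((∑ t, q t l : ℝ)) : EReal) := by
          simp_rw [EReal.coe_neg]
      _ = -⨅ l : PosR', (((∑ t, q t l : ℝ)) : EReal) := ereal_iSup_neg _
      _ = -∑ t, ⨅ l : PosR', ((q t l : ℝ) : EReal) := by
          rw [iInf_sum_eq q hqanti Finset.univ]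
      _ = -(∑ t, cRec (U t) 0 (c t)) := by
          congr 1
          refine Finset.sum_congr rfl fun t _ => ?_
          rw [cRec]
          exact iInf_quot_base (hU t) (cbar t) 0 (c t)
  · rw [if_neg hcone]
    rw [not_forall] at hcone
    obtain ⟨t0, ht0⟩ := hcone
    have hex : ∃ l0 : ℝ, 0 < l0 ∧
        ¬ (∀ t, (delta zbar t + cbar t + ubar t) + l0 • (delta z t + c t + u t) ∈ C t
            ∧ zbar t + l0 • z t ∈ D t) := by
      rcases not_and_or.mp ht0 with hC' | hD'
      · have hnot : ¬ ∀ l : ℝ, 0 < l →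
            (delta zbar t0 + cbar t0 + ubar t0) + l • (delta z t0 + c t0 + u t0) ∈ C t0 :=
          fun hall => hC' (mem_recCone_of_forall (hCclosed t0) (hCconv t0) (Hbar t0).1 hall)
        push_neg at hnot
        obtain ⟨l0, h1, h2⟩ := hnot
        exact ⟨l0, h1, fun hall => h2 ((hall t0).1)⟩
      · have hnot : ¬ ∀ l : ℝ, 0 < l → zbar t0 + l • z t0 ∈ D t0 :=
          fun hall => hD' (mem_recCone_of_forall (hDclosed t0) (hDconv t0) (Hbar t0).2 hall)
        push_neg at hnot
        obtain ⟨l0, h1, h2⟩ := hnot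
        exact ⟨l0, h1, fun hall => h2 ((hall t0).2)⟩
    obtain ⟨l0, hl0pos, hfail⟩ := hex
    have htop : f ((zbar, cbar, ubar) + l0 • (z, c, u)) = ⊤ := by
      rw [hfval l0, if_neg hfail]
    refine top_unique ?_
    rw [recFn]
    refine le_iSup_of_le ⟨l0, hl0pos⟩ ?_
    rw [htop, hfbar, EReal.top_sub_coe, EReal.coe_mul_top_of_pos (inv_pos.2 hl0pos)]
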